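/- Let S be a closed symmetric operator with non-dense domain in a complex Hilbert space H, set H₀ := closure(dom S), and assume S is regular, i.e. the operator S₀ := P_{H₀}S with domain dom S has closed graph. Let z be a nonreal complex number and N_z := (ran(S − z̄I))^⊥. Then the set G := {(f + φ, P_{H₀}(Sf + zφ)) : f ∈ dom S, φ ∈ N_z} is a closed subset of H × H. (That is, the compression P_{H₀}S̃_z of the Shtraus extension S̃_z of S, with domain dom S + N_z, is a closed operator.) -/

import Mathlib

set_option synthInstance.maxHeartbeats 1000000

open scoped ComplexInnerProductSpace

variable {H : Type*} [NormedAddCommGroup H] [InnerProductSpace ℂ H] [CompleteSpace H]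

/-- The operator `P_K T` with domain `dom T`, mapping `H` into the closed subspace `K`. -/
noncomputable def projComp (K : Submodule ℂ H) [CompleteSpace K] (T : H →ₗ.[ℂ] H) :
    H →ₗ.[ℂ] (↥K) where
  domain := T.domain
  toFun := K.orthogonalProjection.toLinearMap ∘ₗ T.toFun

/-- The deficiency subspace `N_λ = (ran (S - λ̄ I))ᗮ` of an operator `S`. -/
noncomputable abbrev defSubspace (S : H →ₗ.[ℂ] H) (lam : ℂ) : Submodule ℂ H :=
  (LinearMap.range (S.toFun - (starRingEnd ℂ lam) • S.domain.subtype))ᗮ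

private lemma imz_key (z : ℂ) (f s : H) (hreal : (⟪s, f⟫).im = 0) :
    |z.im| * ‖f‖ ≤ ‖s - z • f‖ := by
  have him : (⟪s - z • f, f⟫).im = z.im * ‖f‖ ^ 2 := by
    rw [inner_sub_left, inner_smul_left, inner_self_eq_norm_sq_to_K]
    simp [Complex.sub_im, Complex.mul_im, hreal, ← Complex.ofReal_pow]
  have h1 : |(⟪s - z • f, f⟫).im| ≤ ‖s - z • f‖ * ‖f‖ := by
    calc |(⟪s - z • f, f⟫).im| ≤ ‖⟪s - z • f, f⟫‖ := Complex.abs_im_le_norm _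
    _ ≤ ‖s - z • f‖ * ‖f‖ := norm_inner_le_norm _ _
  rw [him, abs_mul, abs_of_nonneg (sq_nonneg ‖f‖ : (0:ℝ) ≤ _)] at h1
  rcases eq_or_lt_of_le (norm_nonneg f) with h0 | h0
  · simp [← h0]
  · nlinarith

/-- The bounded operator `(graph S₀) × N_z → H × H`, `((f, S₀f), φ) ↦ (f + φ, S₀f + z P₀φ)`. -/
private noncomputable def shtrausMap (S : H →ₗ.[ℂ] H) (z : ℂ) :
    (↥(projComp S.domain.topologicalClosure S).graph × ↥(defSubspace S z)) →ₗ[ℂ] H × H where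
  toFun x := ((x.1 : H × ↥S.domain.topologicalClosure).1 + (x.2 : H),
      ((x.1 : H × ↥S.domain.topologicalClosure).2 : H)
        + z • ((S.domain.topologicalClosure.orthogonalProjection (x.2 : H)) : H))
  map_add' a b := by
    simp only [Submodule.coe_add, Prod.fst_add, Prod.snd_add, map_add, Prod.mk_add_mk,
      Prod.mk.injEq]
    constructor <;> module
  map_smul' c a := by
    simp only [Submodule.coe_smul, Prod.smul_fst, Prod.smul_snd, map_smul, RingHom.id_apply,
      Prod.smul_mk, Prod.mk.injEq]
    constructor <;> module

private lemma shtrausMap_apply (S : H →ₗ.[ℂ] H) (z : ℂ)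
    (x : ↥(projComp S.domain.topologicalClosure S).graph × ↥(defSubspace S z)) :
    shtrausMap S z x = ((x.1 : H × ↥S.domain.topologicalClosure).1 + (x.2 : H),
      ((x.1 : H × ↥S.domain.topologicalClosure).2 : H)
        + z • ((S.domain.topologicalClosure.orthogonalProjection (x.2 : H)) : H)) := rfl

set_option maxHeartbeats 2000000 in
/-- Let `S` be a regular closed symmetric operator with non-dense domain
(`S₀ = P_{H₀}S` with domain `dom S` has closed graph, `H₀ = closure (dom S)`) and let `z` be
nonreal.  Then the graph `{(f + φ, P_{H₀}(S f + z φ)) : f ∈ dom S, φ ∈ N_z}` of the compression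
of the Shtraus extension `S̃_z` is closed in `H × H`. -/
theorem isClosed_graph_compression_shtraus_extension
    (S : H →ₗ.[ℂ] H)
    (hsym : ∀ x y : S.domain, ⟪S x, (y : H)⟫ = ⟪(x : H), S y⟫)
    (hclosed : S.IsClosed)
    (hnd : ¬ Dense (S.domain : Set H))
    (hreg : (projComp S.domain.topologicalClosure S).IsClosed)
    (z : ℂ) (hz : z.im ≠ 0) :
    IsClosed {p : H × H | ∃ (f : S.domain) (φ : H), φ ∈ defSubspace S z ∧
      p.1 = (f : H) + φ ∧
      p.2 = (S.domain.topologicalClosure.orthogonalProjection (S f + z • φ) : H)} := by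
  classical
  set K : Submodule ℂ H := S.domain.topologicalClosure with hKdef
  set T : H →ₗ.[ℂ] ↥K := projComp K S with hTdef
  set N : Submodule ℂ H := defSubspace S z with hNdef
  haveI : CompleteSpace T.graph := hreg.completeSpace_coe
  set Φ := shtrausMap S z with hΦdef
  -- basic norm facts
  have hPle : ∀ v : H, ‖(K.orthogonalProjection v : H)‖ ≤ ‖v‖ := fun v => by
    calc ‖(K.orthogonalProjection v : H)‖ = ‖K.orthogonalProjection v‖ := rfl
    _ ≤ ‖K.orthogonalProjection‖ * ‖v‖ := (K.orthogonalProjection).le_opNorm v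
    _ ≤ 1 * ‖v‖ := by
        have := Submodule.orthogonalProjectionOnto_norm_le K
        nlinarith [norm_nonneg v]
    _ = ‖v‖ := one_mul _
  have hZ0 : (0:ℝ) ≤ ‖z‖ := norm_nonneg z
  have hm : (0:ℝ) < |z.im| := abs_pos.mpr hz
  set m : ℝ := |z.im| with hmdef
  set Z : ℝ := ‖z‖ with hZdef
  -- the three coefficient constants
  set B1 : ℝ := (1 + Z) / m with hB1
  set B2 : ℝ := (1 + Z) + Z * B1 with hB2
  set B3 : ℝ := (1 + B2) / m with hB3
  set B4 : ℝ := B3 + 2 with hB4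
  have hB1n : 0 ≤ B1 := by positivity
  have hB2n : 0 ≤ B2 := by positivity
  have hB3n : 0 ≤ B3 := by positivity
  have hB4n : 0 ≤ B4 := by positivity
  set C : ℝ := B1 + B2 + B4 with hC
  have hC0 : 0 ≤ C := by positivity
  -- lower bound : Φ is antilipschitz
  have hlow : ∀ x, ‖x‖ ≤ C * ‖Φ x‖ := by
    rintro ⟨g, φ⟩
    obtain ⟨y, hy1, hy2⟩ := (T.mem_graph_iff).mp g.2
    set f : H := ((g : H × ↥K)).1 with hfdef
    set s : ↥K := ((g : H × ↥K)).2 with hsdef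
    set u : H := (Φ (g, φ)).1 with hudef
    set w : H := (Φ (g, φ)).2 with hwdef
    have hu : u = f + (φ : H) := rfl
    have hw : w = (s : H) + z • ((K.orthogonalProjection (φ : H)) : H) := rfl
    set U : ℝ := ‖Φ (g, φ)‖ with hUdef
    have hU0 : 0 ≤ U := norm_nonneg _
    have hUmax : U = max ‖u‖ ‖w‖ := Prod.norm_def _
    have huU : ‖u‖ ≤ U := by rw [hUmax]; exact le_max_left _ _
    have hwU : ‖w‖ ≤ U := by rw [hUmax]; exact le_max_right _ _
    -- f is in K
    have hfK : f ∈ K := by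
      rw [← hy1]
      exact Submodule.le_topologicalClosure _ y.2
    have hPf : ((K.orthogonalProjection f) : H) = f := by
      have : K.orthogonalProjection (((⟨f, hfK⟩ : ↥K) : H)) = ⟨f, hfK⟩ :=
        Submodule.orthogonalProjection_mem_subspace_eq_self _
      simpa using congrArg (Subtype.val) this
    -- reality of ⟪s, f⟫
    have hreal : (⟪(s : H), f⟫).im = 0 := by
      have hsy : (s : H) = ((K.orthogonalProjection (S y)) : H) := by
        rw [← hy2]; rfl
      have h2 : ⟪(s : H), f⟫ = ⟪S y, f⟫ := by
        rw [hsy]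
        have h0 : ⟪S y - ((K.orthogonalProjection (S y)) : H), f⟫ = 0 :=
          Submodule.starProjection_inner_eq_zero (K := K) (S y) f hfK
        rw [inner_sub_left] at h0
        linear_combination -h0
      have h3 : ⟪S y, (y : H)⟫ = (starRingEnd ℂ) ⟪S y, (y : H)⟫ := by
        conv_lhs => rw [hsym y y]
        rw [← inner_conj_symm]
      rw [h2, ← hy1]
      have := Complex.conj_eq_iff_im.mp h3.symm
      exact this
    -- the key identity
    have hPu : ((K.orthogonalProjection u) : H)
        = f + ((K.orthogonalProjection (φ : H)) : H) := by
      rw [hu, map_add, Submodule.coe_add, hPf]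
    have hid : (s : H) - z • f = w - z • ((K.orthogonalProjection u) : H) := by
      rw [hPu, hw]; module
    -- bound on ‖f‖
    have hkey : m * ‖f‖ ≤ ‖(s : H) - z • f‖ := imz_key z f (s : H) hreal
    have hbound : ‖(s : H) - z • f‖ ≤ U + Z * U := by
      rw [hid]
      calc ‖w - z • ((K.orthogonalProjection u) : H)‖
          ≤ ‖w‖ + ‖z • ((K.orthogonalProjection u) : H)‖ := norm_sub_le _ _
      _ = ‖w‖ + Z * ‖((K.orthogonalProjection u) : H)‖ := by rw [norm_smul]
      _ ≤ U + Z * U := by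
          have := hPle u
          have h4 : ‖((K.orthogonalProjection u) : H)‖ ≤ U := le_trans this huU
          have := mul_le_mul_of_nonneg_left h4 hZ0
          linarith
    have hfB : ‖f‖ ≤ B1 * U := by
      rw [hB1, div_mul_eq_mul_div, le_div_iff₀ hm]
      calc ‖f‖ * m = m * ‖f‖ := mul_comm _ _
      _ ≤ U + Z * U := le_trans hkey hbound
      _ = (1 + Z) * U := by ring
    -- bound on ‖s‖
    have hsB : ‖(s : H)‖ ≤ B2 * U := by
      have h5 : ‖(s : H)‖ ≤ ‖(s : H) - z • f‖ + Z * ‖f‖ := by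
        calc ‖(s : H)‖ = ‖((s : H) - z • f) + z • f‖ := by rw [sub_add_cancel]
        _ ≤ ‖(s : H) - z • f‖ + ‖z • f‖ := norm_add_le _ _
        _ = ‖(s : H) - z • f‖ + Z * ‖f‖ := by rw [norm_smul]
      have h6 := mul_le_mul_of_nonneg_left hfB hZ0
      rw [hB2]
      have := hbound
      ring_nf
      ring_nf at h5 h6 this
      linarith
    -- bound on ‖Pφ‖
    have hpB : ‖((K.orthogonalProjection (φ : H)) : H)‖ ≤ B3 * U := by
      have h7 : z • ((K.orthogonalProjection (φ : H)) : H) = w - (s : H) := by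
        rw [hw]; module
      have h8 : Z * ‖((K.orthogonalProjection (φ : H)) : H)‖ ≤ U + B2 * U := by
        calc Z * ‖((K.orthogonalProjection (φ : H)) : H)‖
            = ‖z • ((K.orthogonalProjection (φ : H)) : H)‖ := by rw [norm_smul]
        _ = ‖w - (s : H)‖ := by rw [h7]
        _ ≤ ‖w‖ + ‖(s : H)‖ := norm_sub_le _ _
        _ ≤ U + B2 * U := add_le_add hwU hsB
      have hmZ : m ≤ Z := Complex.abs_im_le_norm z
      have hp0 : (0:ℝ) ≤ ‖((K.orthogonalProjection (φ : H)) : H)‖ := norm_nonneg _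
      have h9 : m * ‖((K.orthogonalProjection (φ : H)) : H)‖ ≤ U + B2 * U :=
        le_trans (mul_le_mul_of_nonneg_right hmZ hp0) h8
      rw [hB3, div_mul_eq_mul_div, le_div_iff₀ hm]
      ring_nf
      ring_nf at h9
      linarith
    -- bound on ‖φ‖
    have hφB : ‖(φ : H)‖ ≤ B4 * U := by
      have h10 : (φ : H) - ((K.orthogonalProjection (φ : H)) : H)
          = u - ((K.orthogonalProjection u) : H) := by
        rw [hPu, hu]; abel
      have h11 : ‖(φ : H)‖ ≤ ‖((K.orthogonalProjection (φ : H)) : H)‖ + 2 * U := by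
        calc ‖(φ : H)‖
            = ‖((K.orthogonalProjection (φ : H)) : H) + ((φ : H) - ((K.orthogonalProjection (φ : H)) : H))‖ := by
              congr 1; abel
        _ ≤ ‖((K.orthogonalProjection (φ : H)) : H)‖ + ‖(φ : H) - ((K.orthogonalProjection (φ : H)) : H)‖ :=
              norm_add_le _ _
        _ ≤ ‖((K.orthogonalProjection (φ : H)) : H)‖ + 2 * U := by
              rw [h10]
              have h12 : ‖u - ((K.orthogonalProjection u) : H)‖ ≤ ‖u‖ + ‖((K.orthogonalProjection u) : H)‖ :=
                norm_sub_le _ _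
              have h13 := hPle u
              linarith
      rw [hB4]
      linarith
    -- combine
    have hxnorm : ‖((g, φ) : ↥T.graph × ↥N)‖ = max (max ‖f‖ ‖(s : H)‖) ‖(φ : H)‖ := by
      rw [Prod.norm_def, Submodule.coe_norm, Submodule.coe_norm, Prod.norm_def, Submodule.coe_norm]
    rw [hxnorm]
    have n1 : 0 ≤ B1 * U := mul_nonneg hB1n hU0
    have n2 : 0 ≤ B2 * U := mul_nonneg hB2n hU0
    have n4 : 0 ≤ B4 * U := mul_nonneg hB4n hU0
    have e1 : ‖f‖ ≤ C * U := by rw [hC]; ring_nf; ring_nf at hfB n2 n4; linarith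
    have e2 : ‖(s : H)‖ ≤ C * U := by rw [hC]; ring_nf; ring_nf at hsB n1 n4; linarith
    have e3 : ‖(φ : H)‖ ≤ C * U := by rw [hC]; ring_nf; ring_nf at hφB n1 n2; linarith
    exact max_le (max_le e1 e2) e3
  -- upper bound : Φ is Lipschitz
  have hup : ∀ x, ‖Φ x‖ ≤ (2 + Z) * ‖x‖ := by
    rintro ⟨g, φ⟩
    have hxnorm : ‖((g, φ) : ↥T.graph × ↥N)‖
        = max (max ‖((g : H × ↥K)).1‖ ‖(((g : H × ↥K)).2 : H)‖) ‖(φ : H)‖ := by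
      rw [Prod.norm_def, Submodule.coe_norm, Prod.norm_def, Submodule.coe_norm]
      rfl
    have hx1 : ‖((g : H × ↥K)).1‖ ≤ ‖((g, φ) : ↥T.graph × ↥N)‖ := by
      rw [hxnorm]; exact le_trans (le_max_left _ _) (le_max_left _ _)
    have hx2 : ‖(((g : H × ↥K)).2 : H)‖ ≤ ‖((g, φ) : ↥T.graph × ↥N)‖ := by
      rw [hxnorm]; exact le_trans (le_max_right _ _) (le_max_left _ _)
    have hx3 : ‖(φ : H)‖ ≤ ‖((g, φ) : ↥T.graph × ↥N)‖ := by
      rw [hxnorm]; exact le_max_right _ _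
    have hn0 : 0 ≤ ‖((g, φ) : ↥T.graph × ↥N)‖ := norm_nonneg _
    rw [Prod.norm_def]
    refine max_le ?_ ?_
    · calc ‖(Φ (g, φ)).1‖ = ‖((g : H × ↥K)).1 + (φ : H)‖ := rfl
      _ ≤ ‖((g : H × ↥K)).1‖ + ‖(φ : H)‖ := norm_add_le _ _
      _ ≤ (2 + Z) * ‖((g, φ) : ↥T.graph × ↥N)‖ := by
            have := mul_nonneg hZ0 hn0
            ring_nf
            ring_nf at this
            linarith
    · calc ‖(Φ (g, φ)).2‖
          = ‖(((g : H × ↥K)).2 : H) + z • ((K.orthogonalProjection (φ : H)) : H)‖ := rfl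
      _ ≤ ‖(((g : H × ↥K)).2 : H)‖ + Z * ‖((K.orthogonalProjection (φ : H)) : H)‖ := by
            have := norm_add_le (((g : H × ↥K)).2 : H) (z • ((K.orthogonalProjection (φ : H)) : H))
            rw [norm_smul] at this; exact this
      _ ≤ (2 + Z) * ‖((g, φ) : ↥T.graph × ↥N)‖ := by
            have hh := mul_le_mul_of_nonneg_left (le_trans (hPle (φ : H)) hx3) hZ0
            ring_nf
            ring_nf at hh
            linarith
  -- closed range
  have hanti : AntilipschitzWith C.toNNReal Φ := by
    apply AddMonoidHomClass.antilipschitz_of_bound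
    intro x
    rw [Real.coe_toNNReal _ hC0]
    exact hlow x
  have hlip : LipschitzWith (2 + Z).toNNReal Φ :=
    AddMonoidHomClass.lipschitz_of_bound Φ _ hup
  have hrange : IsClosed (Set.range Φ) := hanti.isClosed_range hlip.uniformContinuous
  -- identify the set with the range
  have hset : {p : H × H | ∃ (f : S.domain) (φ : H), φ ∈ defSubspace S z ∧
      p.1 = (f : H) + φ ∧
      p.2 = (S.domain.topologicalClosure.orthogonalProjection (S f + z • φ) : H)}
      = Set.range Φ := by
    ext p
    simp only [Set.mem_setOf_eq, Set.mem_range]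
    constructor
    · rintro ⟨f, φ, hφ, h1, h2⟩
      refine ⟨(⟨((f : H), T f), T.mem_graph f⟩, ⟨φ, hφ⟩), ?_⟩
      have hTf : ((T f : ↥K) : H) = ((K.orthogonalProjection (S f)) : H) := rfl
      have hP : ((K.orthogonalProjection (S f + z • φ)) : H)
          = ((K.orthogonalProjection (S f)) : H)
            + z • ((K.orthogonalProjection φ) : H) := by
        rw [map_add, map_smul, Submodule.coe_add, Submodule.coe_smul]
      refine Prod.ext ?_ ?_
      · show (f : H) + φ = p.1
        exact h1.symm
      · show ((T f : ↥K) : H) + z • ((K.orthogonalProjection φ) : H) = p.2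
        rw [hTf, h2, hP]
    · rintro ⟨⟨g, φ⟩, rfl⟩
      obtain ⟨y, hy1, hy2⟩ := (T.mem_graph_iff).mp g.2
      refine ⟨y, (φ : H), φ.2, ?_, ?_⟩
      · show ((g : H × ↥K)).1 + (φ : H) = (y : H) + (φ : H)
        rw [hy1]
      · show (((g : H × ↥K)).2 : H) + z • ((K.orthogonalProjection (φ : H)) : H)
            = ((K.orthogonalProjection (S y + z • (φ : H))) : H)
        have hP : ((K.orthogonalProjection (S y + z • (φ : H))) : H)
            = ((K.orthogonalProjection (S y)) : H)
              + z • ((K.orthogonalProjection (φ : H)) : H) := by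
          rw [map_add, map_smul, Submodule.coe_add, Submodule.coe_smul]
        rw [hP, ← hy2]
        rfl
  rw [hset]
  exact hrange
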